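/- Let Q_{λ,δ} = [[E₁₁ + δG₁₁, E₁₂ + δG₁₂],[E₂₁ + δG₂₁, E₂₂ + λF₂₂ + δG₂₂]] be a real symmetric block matrix with G₁₁ ≻ 0 and F₂₂ ≻ 0. Then: (a) there exists ε < 0 such that for δ ∈ [ε, 0), E₁₁ + δG₁₁ is invertible with μ₊(E₁₁ + δG₁₁) = μ₊(E₁₁); and (b) for each such δ there exists λ_δ < 0 such that for λ ≤ λ_δ the Schur complement S_{λ,δ} = E₂₂ + λF₂₂ + δG₂₂ − (E₁₂+δG₁₂)ᵀ(E₁₁+δG₁₁)⁻¹(E₁₂+δG₁₂) is negative definite, whence μ₊(Q_{λ,δ}) = μ₊(E₁₁). -/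

import Mathlib

open Matrix

/-- The number of strictly positive eigenvalues (with multiplicity) of a real symmetric
(Hermitian) matrix; `0` for non-Hermitian matrices. -/
noncomputable def posIdx {n : Type*} [Fintype n] [DecidableEq n] (A : Matrix n n ℝ) : ℕ :=
  if h : A.IsHermitian then Fintype.card {i // 0 < h.eigenvalues i} else 0

namespace SchurPerturbAux

open Module Submodule

variable {n : Type*} [Fintype n] [DecidableEq n]

lemma dp_eq_inner (x y : EuclideanSpace ℝ n) :
    dotProduct (x : n → ℝ) (y : n → ℝ) = (inner ℝ x y : ℝ) := by
  simp [EuclideanSpace.inner_eq_star_dotProduct, dotProduct, mul_comm]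

lemma exists_pos_lb {ι : Type*} [Fintype ι] (g : ι → ℝ) (hg : ∀ i, 0 < g i) :
    ∃ m : ℝ, 0 < m ∧ ∀ i, m ≤ g i := by
  cases isEmpty_or_nonempty ι with
  | inl h => exact ⟨1, one_pos, fun i => (h.false i).elim⟩
  | inr h =>
    refine ⟨Finset.univ.inf' Finset.univ_nonempty g, ?_,
      fun i => Finset.inf'_le g (Finset.mem_univ i)⟩
    rw [Finset.lt_inf'_iff]
    exact fun i _ => hg i

lemma exists_abs_ub {ι : Type*} [Fintype ι] (g : ι → ℝ) :
    ∃ C : ℝ, 0 < C ∧ ∀ i, |g i| ≤ C := by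
  refine ⟨(∑ i, |g i|) + 1, by positivity, fun i => ?_⟩
  have h1 : |g i| ≤ ∑ j, |g j| :=
    Finset.single_le_sum (fun j _ => abs_nonneg (g j)) (Finset.mem_univ i)
  linarith

section Quad

variable {A : Matrix n n ℝ} (hA : A.IsHermitian)

lemma mulVec_basis (j : n) :
    A *ᵥ (hA.eigenvectorBasis j : n → ℝ) =
      hA.eigenvalues j • (hA.eigenvectorBasis j : n → ℝ) :=
  hA.mulVec_eigenvectorBasis j

lemma quad_sum (c : n → ℝ) :
    dotProduct (WithLp.ofLp (∑ i, c i • (hA.eigenvectorBasis i : EuclideanSpace ℝ n)))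
        (A *ᵥ (WithLp.ofLp (∑ i, c i • (hA.eigenvectorBasis i : EuclideanSpace ℝ n)))) =
      ∑ i, hA.eigenvalues i * c i ^ 2 := by
  have h1 : (A *ᵥ (WithLp.ofLp (∑ i, c i • (hA.eigenvectorBasis i : EuclideanSpace ℝ n))))
      = (WithLp.ofLp (∑ i, (hA.eigenvalues i * c i) • (hA.eigenvectorBasis i : EuclideanSpace ℝ n))) := by
    rw [WithLp.ofLp_sum, WithLp.ofLp_sum, ← Matrix.mulVecLin_apply, map_sum]
    refine Finset.sum_congr rfl fun i _ => ?_
    rw [WithLp.ofLp_smul, WithLp.ofLp_smul, _root_.map_smul, Matrix.mulVecLin_apply, mulVec_basis hA i, smul_smul, mul_comm]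
  rw [h1, dp_eq_inner]
  have h2 := hA.eigenvectorBasis.orthonormal.inner_sum c
    (fun i => hA.eigenvalues i * c i) Finset.univ
  simp only [RCLike.star_def, starRingEnd_apply, star_trivial] at h2
  rw [h2]
  exact Finset.sum_congr rfl fun i _ => by ring

lemma sq_sum (c : n → ℝ) :
    dotProduct (WithLp.ofLp (∑ i, c i • (hA.eigenvectorBasis i : EuclideanSpace ℝ n)))
        (WithLp.ofLp (∑ i, c i • (hA.eigenvectorBasis i : EuclideanSpace ℝ n))) =
      ∑ i, c i ^ 2 := by
  rw [dp_eq_inner]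
  have h2 := hA.eigenvectorBasis.orthonormal.inner_sum c c Finset.univ
  simp only [RCLike.star_def, starRingEnd_apply, star_trivial] at h2
  rw [h2]
  exact Finset.sum_congr rfl fun i _ => by ring

lemma exists_repr (x : EuclideanSpace ℝ n) :
    ∃ c : n → ℝ, x = ∑ i, c i • (hA.eigenvectorBasis i : EuclideanSpace ℝ n) :=
  ⟨fun i => hA.eigenvectorBasis.repr x i, (hA.eigenvectorBasis.sum_repr x).symm⟩

lemma exists_span_subspace (φ : n → Prop) [DecidablePred φ] :
    ∃ V : Submodule ℝ (EuclideanSpace ℝ n),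
      finrank ℝ V = Fintype.card {i // φ i} ∧
      ∀ x ∈ V, ∃ c : n → ℝ, (∀ i, ¬ φ i → c i = 0) ∧
        x = ∑ i, c i • (hA.eigenvectorBasis i : EuclideanSpace ℝ n) := by
  classical
  set b := hA.eigenvectorBasis with hb
  have hon : Orthonormal ℝ (fun j : {i // φ i} => b j.1) :=
    b.orthonormal.comp _ Subtype.val_injective
  refine ⟨span ℝ (Set.range (fun j : {i // φ i} => (b j.1 : EuclideanSpace ℝ n))), ?_, ?_⟩
  · rw [finrank_span_eq_card hon.linearIndependent]
  · intro x hx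
    obtain ⟨d, hd⟩ := (mem_span_range_iff_exists_fun ℝ).1 hx
    refine ⟨fun i => if h : φ i then d ⟨i, h⟩ else 0, fun i hi => dif_neg hi, ?_⟩
    rw [← hd]
    have h1 : ∀ i ∈ Finset.univ, i ∉ Finset.univ.filter φ →
        ((if h : φ i then d ⟨i, h⟩ else 0) • (b i : EuclideanSpace ℝ n)) = 0 := by
      intro i _ hi
      rw [Finset.mem_filter] at hi
      push_neg at hi
      rw [dif_neg (hi (Finset.mem_univ i)), zero_smul]
    rw [← Finset.sum_subset (Finset.subset_univ _) h1,
      Finset.sum_subtype (p := φ) (Finset.univ.filter φ) (by simp) _]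
    refine (Finset.sum_congr rfl fun j _ => ?_).symm
    rw [dif_pos j.2]

lemma finrank_le_card_pos (W : Submodule ℝ (EuclideanSpace ℝ n))
    (hW : ∀ x ∈ W, x ≠ 0 → 0 < dotProduct (x : n → ℝ) (A *ᵥ (x : n → ℝ))) :
    finrank ℝ W ≤ Fintype.card {i // 0 < hA.eigenvalues i} := by
  classical
  obtain ⟨V, hVrank, hVmem⟩ := exists_span_subspace hA (fun i => ¬ 0 < hA.eigenvalues i)
  have hVneg : ∀ x ∈ V, dotProduct (x : n → ℝ) (A *ᵥ (x : n → ℝ)) ≤ 0 := by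
    intro x hx
    obtain ⟨c, hc0, rfl⟩ := hVmem x hx
    rw [quad_sum hA c]
    refine Finset.sum_nonpos fun i _ => ?_
    by_cases h : 0 < hA.eigenvalues i
    · rw [hc0 i (not_not_intro h)]; simp
    · exact mul_nonpos_of_nonpos_of_nonneg (le_of_not_gt h) (sq_nonneg _)
  have hdisj : Disjoint W V := by
    rw [Submodule.disjoint_def]
    intro x hxW hxV
    by_contra hx0
    exact absurd (hVneg x hxV) (not_le.2 (hW x hxW hx0))
  have hle := Submodule.finrank_add_finrank_le_of_disjoint hdisj
  rw [finrank_euclideanSpace] at hle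
  rw [hVrank, Fintype.card_subtype_compl] at hle
  have hle2 := Fintype.card_subtype_le (fun i => 0 < hA.eigenvalues i)
  omega

lemma finrank_le_card_neg (W : Submodule ℝ (EuclideanSpace ℝ n))
    (hW : ∀ x ∈ W, x ≠ 0 → dotProduct (x : n → ℝ) (A *ᵥ (x : n → ℝ)) < 0) :
    finrank ℝ W ≤ Fintype.card {i // hA.eigenvalues i < 0} := by
  classical
  obtain ⟨V, hVrank, hVmem⟩ := exists_span_subspace hA (fun i => ¬ hA.eigenvalues i < 0)
  have hVpos : ∀ x ∈ V, 0 ≤ dotProduct (x : n → ℝ) (A *ᵥ (x : n → ℝ)) := by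
    intro x hx
    obtain ⟨c, hc0, rfl⟩ := hVmem x hx
    rw [quad_sum hA c]
    refine Finset.sum_nonneg fun i _ => ?_
    by_cases h : hA.eigenvalues i < 0
    · rw [hc0 i (not_not_intro h)]; simp
    · exact mul_nonneg (le_of_not_gt h) (sq_nonneg _)
  have hdisj : Disjoint W V := by
    rw [Submodule.disjoint_def]
    intro x hxW hxV
    by_contra hx0
    exact absurd (hVpos x hxV) (not_le.2 (hW x hxW hx0))
  have hle := Submodule.finrank_add_finrank_le_of_disjoint hdisj
  rw [finrank_euclideanSpace] at hle
  rw [hVrank, Fintype.card_subtype_compl] at hle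
  have hle2 := Fintype.card_subtype_le (fun i => hA.eigenvalues i < 0)
  omega

end Quad

lemma card_pos_add_card_neg_le (μ : n → ℝ) :
    Fintype.card {i // 0 < μ i} + Fintype.card {i // μ i < 0} ≤ Fintype.card n := by
  classical
  rw [Fintype.card_subtype, Fintype.card_subtype]
  have hdisj : Disjoint (Finset.univ.filter fun i => 0 < μ i)
      (Finset.univ.filter fun i => μ i < 0) := by
    rw [Finset.disjoint_left]
    intro a ha hb
    rw [Finset.mem_filter] at ha hb
    exact absurd hb.2 (asymm ha.2)
  rw [← Finset.card_union_of_disjoint hdisj]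
  exact Finset.card_le_univ _

lemma card_pos_add_card_neg_lt {μ : n → ℝ} {i : n} (hi : μ i = 0) :
    Fintype.card {j // 0 < μ j} + Fintype.card {j // μ j < 0} < Fintype.card n := by
  classical
  rw [Fintype.card_subtype, Fintype.card_subtype]
  have hdisj : Disjoint (Finset.univ.filter fun j => 0 < μ j)
      (Finset.univ.filter fun j => μ j < 0) := by
    rw [Finset.disjoint_left]
    intro a ha hb
    rw [Finset.mem_filter] at ha hb
    exact absurd hb.2 (asymm ha.2)
  rw [← Finset.card_union_of_disjoint hdisj]
  refine Finset.card_lt_card ?_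
  rw [Finset.ssubset_iff_of_subset (Finset.subset_univ _)]
  exact ⟨i, Finset.mem_univ i, by simp [hi]⟩

lemma posIdx_spec {A : Matrix n n ℝ} (hA : A.IsHermitian) {p : ℕ}
    (Wp Wm : Submodule ℝ (EuclideanSpace ℝ n))
    (hWp : ∀ x ∈ Wp, x ≠ 0 → 0 < dotProduct (x : n → ℝ) (A *ᵥ (x : n → ℝ)))
    (hWm : ∀ x ∈ Wm, x ≠ 0 → dotProduct (x : n → ℝ) (A *ᵥ (x : n → ℝ)) < 0)
    (hdp : finrank ℝ Wp = p) (hdm : finrank ℝ Wm = Fintype.card n - p)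
    (hp : p ≤ Fintype.card n) :
    posIdx A = p ∧ IsUnit A := by
  have h1 : p ≤ Fintype.card {i // 0 < hA.eigenvalues i} :=
    hdp ▸ finrank_le_card_pos hA Wp hWp
  have h2 : Fintype.card n - p ≤ Fintype.card {i // hA.eigenvalues i < 0} :=
    hdm ▸ finrank_le_card_neg hA Wm hWm
  have h3 := card_pos_add_card_neg_le hA.eigenvalues
  have hzero : ∀ i, hA.eigenvalues i ≠ 0 := by
    intro i hi
    have := card_pos_add_card_neg_lt hi
    omega
  constructor
  · rw [posIdx, dif_pos hA]; omega
  · rw [Matrix.isUnit_iff_isUnit_det, hA.det_eq_prod_eigenvalues, isUnit_iff_ne_zero]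
    simpa using Finset.prod_ne_zero_iff.2 fun i _ => hzero i

lemma abs_quad_le (M : Matrix n n ℝ) (hM : M.IsHermitian) :
    ∃ C : ℝ, 0 < C ∧ ∀ x : n → ℝ,
      |dotProduct x (M *ᵥ x)| ≤ C * dotProduct x x := by
  obtain ⟨C, hC0, hC⟩ := exists_abs_ub hM.eigenvalues
  refine ⟨C, hC0, fun x => ?_⟩
  obtain ⟨c, hc⟩ := exists_repr hM (x := WithLp.toLp 2 x)
  have hx : x = WithLp.ofLp (∑ i, c i • (hM.eigenvectorBasis i : EuclideanSpace ℝ n)) := by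
    rw [← hc]
  subst hx
  rw [quad_sum hM c, sq_sum hM c, Finset.mul_sum]
  refine le_trans (Finset.abs_sum_le_sum_abs _ _) (Finset.sum_le_sum fun i _ => ?_)
  rw [abs_mul, abs_of_nonneg (sq_nonneg (c i))]
  exact mul_le_mul_of_nonneg_right (hC i) (sq_nonneg _)

lemma posdef_quad_lb {F : Matrix n n ℝ} (hF : F.PosDef) :
    ∃ f : ℝ, 0 < f ∧ ∀ x : n → ℝ,
      f * dotProduct x x ≤ dotProduct x (F *ᵥ x) := by
  obtain ⟨f, hf0, hf⟩ := exists_pos_lb hF.1.eigenvalues hF.eigenvalues_pos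
  refine ⟨f, hf0, fun x => ?_⟩
  obtain ⟨c, hc⟩ := exists_repr hF.1 (x := WithLp.toLp 2 x)
  have hx : x = WithLp.ofLp (∑ i, c i • (hF.1.eigenvectorBasis i : EuclideanSpace ℝ n)) := by
    rw [← hc]
  subst hx
  rw [quad_sum hF.1 c, sq_sum hF.1 c, Finset.mul_sum]
  exact Finset.sum_le_sum fun i _ => mul_le_mul_of_nonneg_right (hf i) (sq_nonneg _)

lemma herm_of_symm {A : Matrix n n ℝ} (h : A.IsSymm) : A.IsHermitian := by
  rwa [Matrix.IsHermitian, Matrix.conjTranspose_eq_transpose_of_trivial]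

lemma symm_of_herm {A : Matrix n n ℝ} (h : A.IsHermitian) : A.IsSymm := by
  rwa [Matrix.IsHermitian, Matrix.conjTranspose_eq_transpose_of_trivial] at h

lemma dotProduct_self_pos {x : n → ℝ} (hx : x ≠ 0) : 0 < dotProduct x x := by
  have h1 : 0 ≤ dotProduct x x :=
    Finset.sum_nonneg fun i _ => mul_self_nonneg (x i)
  rcases h1.lt_or_eq with h | h
  · exact h
  · exact absurd (dotProduct_self_eq_zero.1 h.symm) hx

end SchurPerturbAux

set_option maxHeartbeats 2000000 in
/-- For the symmetric block matrix
`Q_{λ,δ} = [[E₁₁ + δG₁₁, E₁₂ + δG₁₂],[(E₁₂ + δG₁₂)ᵀ, E₂₂ + λF₂₂ + δG₂₂]]` with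
`G₁₁ ≻ 0` and `F₂₂ ≻ 0`: (a) there is `ε < 0` such that for `δ ∈ [ε, 0)` the block
`E₁₁ + δG₁₁` is invertible with `μ₊(E₁₁ + δG₁₁) = μ₊(E₁₁)`; and (b) for each such `δ`
there is `λ_δ < 0` such that for all `λ ≤ λ_δ` the Schur complement is negative definite,
whence `μ₊(Q_{λ,δ}) = μ₊(E₁₁)`. -/
theorem schur_perturbation_inertia {n₁ n₂ : ℕ}
    (E₁₁ G₁₁ : Matrix (Fin n₁) (Fin n₁) ℝ) (hE₁₁ : E₁₁.IsSymm) (hG₁₁ : G₁₁.PosDef)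
    (E₁₂ G₁₂ : Matrix (Fin n₁) (Fin n₂) ℝ)
    (E₂₂ F₂₂ G₂₂ : Matrix (Fin n₂) (Fin n₂) ℝ)
    (hE₂₂ : E₂₂.IsSymm) (hG₂₂ : G₂₂.IsSymm) (hF₂₂ : F₂₂.PosDef)
    (Q : ℝ → ℝ → Matrix (Fin n₁ ⊕ Fin n₂) (Fin n₁ ⊕ Fin n₂) ℝ)
    (hQ : ∀ lam δ : ℝ, Q lam δ =
      Matrix.fromBlocks (E₁₁ + δ • G₁₁) (E₁₂ + δ • G₁₂)
        ((E₁₂ + δ • G₁₂)ᵀ) (E₂₂ + lam • F₂₂ + δ • G₂₂)) :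
    ∃ ε : ℝ, ε < 0 ∧ ∀ δ : ℝ, ε ≤ δ → δ < 0 →
      (IsUnit (E₁₁ + δ • G₁₁) ∧ posIdx (E₁₁ + δ • G₁₁) = posIdx E₁₁) ∧
      ∃ lamδ : ℝ, lamδ < 0 ∧ ∀ lam : ℝ, lam ≤ lamδ →
        (-(E₂₂ + lam • F₂₂ + δ • G₂₂ -
            (E₁₂ + δ • G₁₂)ᵀ * (E₁₁ + δ • G₁₁)⁻¹ * (E₁₂ + δ • G₁₂))).PosDef ∧
        posIdx (Q lam δ) = posIdx E₁₁ := by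
  classical
  have hEh : E₁₁.IsHermitian := SchurPerturbAux.herm_of_symm hE₁₁
  set p := Fintype.card {i // 0 < hEh.eigenvalues i} with hpdef
  have hpE : posIdx E₁₁ = p := dif_pos hEh
  obtain ⟨m, hm0, hm⟩ := SchurPerturbAux.exists_pos_lb
    (fun j : {i // 0 < hEh.eigenvalues i} => hEh.eigenvalues j.1) (fun j => j.2)
  obtain ⟨C, hC0, hC⟩ := SchurPerturbAux.abs_quad_le G₁₁ hG₁₁.1
  obtain ⟨Vp, hVprank, hVpmem⟩ :=
    SchurPerturbAux.exists_span_subspace hEh (fun i => 0 < hEh.eigenvalues i)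
  obtain ⟨Vm, hVmrank, hVmmem⟩ :=
    SchurPerturbAux.exists_span_subspace hEh (fun i => ¬ 0 < hEh.eigenvalues i)
  have hVprank' : Module.finrank ℝ Vp = p := hVprank
  have hVmrank' : Module.finrank ℝ Vm = Fintype.card (Fin n₁) - p := by
    rw [hVmrank, Fintype.card_subtype_compl]
  have hple : p ≤ Fintype.card (Fin n₁) := Fintype.card_subtype_le _
  refine ⟨-(m / (2 * C)), neg_lt_zero.2 (by positivity), fun δ hδ₁ hδ₂ => ?_⟩
  have hGsymmEq : G₁₁ᵀ = G₁₁ := SchurPerturbAux.symm_of_herm hG₁₁.1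
  have hAsymmEq : (E₁₁ + δ • G₁₁)ᵀ = E₁₁ + δ • G₁₁ := by
    rw [Matrix.transpose_add, Matrix.transpose_smul, hE₁₁.eq, hGsymmEq]
  have hAherm : (E₁₁ + δ • G₁₁).IsHermitian := SchurPerturbAux.herm_of_symm hAsymmEq
  -- splitting the quadratic form of `E₁₁ + δ • G₁₁`
  have hsplit : ∀ x : Fin n₁ → ℝ,
      dotProduct x ((E₁₁ + δ • G₁₁) *ᵥ x) =
        dotProduct x (E₁₁ *ᵥ x) + δ * dotProduct x (G₁₁ *ᵥ x) := by
    intro x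
    rw [Matrix.add_mulVec, Matrix.smul_mulVec, dotProduct_add,
      dotProduct_smul, smul_eq_mul]
  have hGpos : ∀ x : Fin n₁ → ℝ, x ≠ 0 → 0 < dotProduct x (G₁₁ *ᵥ x) := by
    intro x hx
    have h := hG₁₁.dotProduct_mulVec_pos hx
    simpa using h
  have hApos : ∀ x ∈ Vp, x ≠ 0 →
      0 < dotProduct (x : Fin n₁ → ℝ) ((E₁₁ + δ • G₁₁) *ᵥ (x : Fin n₁ → ℝ)) := by
    intro x hx hx0
    obtain ⟨c, hc0, hcx⟩ := hVpmem x hx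
    subst hcx
    rw [hsplit]
    set x : EuclideanSpace ℝ (Fin n₁) :=
      ∑ i, c i • (hEh.eigenvectorBasis i : EuclideanSpace ℝ (Fin n₁)) with hxdef
    have ht : 0 < dotProduct (x : Fin n₁ → ℝ) (x : Fin n₁ → ℝ) :=
      SchurPerturbAux.dotProduct_self_pos ((WithLp.ofLp_eq_zero 2).not.2 hx0)
    have hqE : m * dotProduct (x : Fin n₁ → ℝ) (x : Fin n₁ → ℝ) ≤
        dotProduct (x : Fin n₁ → ℝ) (E₁₁ *ᵥ (x : Fin n₁ → ℝ)) := by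
      rw [hxdef, SchurPerturbAux.quad_sum hEh c, SchurPerturbAux.sq_sum hEh c, Finset.mul_sum]
      refine Finset.sum_le_sum fun i _ => ?_
      by_cases h : 0 < hEh.eigenvalues i
      · exact mul_le_mul_of_nonneg_right (hm ⟨i, h⟩) (sq_nonneg _)
      · rw [hc0 i h]; simp
    have hqG := hC (x : Fin n₁ → ℝ)
    have h1 : δ * (C * dotProduct (x : Fin n₁ → ℝ) (x : Fin n₁ → ℝ)) ≤
        δ * dotProduct (x : Fin n₁ → ℝ) (G₁₁ *ᵥ (x : Fin n₁ → ℝ)) :=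
      mul_le_mul_of_nonpos_left (abs_le.1 hqG).2 hδ₂.le
    have h2 : -(m / (2 * C)) * (C * dotProduct (x : Fin n₁ → ℝ) (x : Fin n₁ → ℝ)) ≤
        δ * (C * dotProduct (x : Fin n₁ → ℝ) (x : Fin n₁ → ℝ)) :=
      mul_le_mul_of_nonneg_right hδ₁ (by positivity)
    have h3 : -(m / (2 * C)) * (C * dotProduct (x : Fin n₁ → ℝ) (x : Fin n₁ → ℝ)) =
        -(m / 2) * dotProduct (x : Fin n₁ → ℝ) (x : Fin n₁ → ℝ) := by
      field_simp
    have h4 : 0 < m / 2 * dotProduct (x : Fin n₁ → ℝ) (x : Fin n₁ → ℝ) :=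
      mul_pos (half_pos hm0) ht
    linarith
  have hAneg : ∀ x ∈ Vm, x ≠ 0 →
      dotProduct (x : Fin n₁ → ℝ) ((E₁₁ + δ • G₁₁) *ᵥ (x : Fin n₁ → ℝ)) < 0 := by
    intro x hx hx0
    obtain ⟨c, hc0, hcx⟩ := hVmmem x hx
    subst hcx
    rw [hsplit]
    set x : EuclideanSpace ℝ (Fin n₁) :=
      ∑ i, c i • (hEh.eigenvectorBasis i : EuclideanSpace ℝ (Fin n₁)) with hxdef
    have hqE : dotProduct (x : Fin n₁ → ℝ) (E₁₁ *ᵥ (x : Fin n₁ → ℝ)) ≤ 0 := by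
      rw [hxdef, SchurPerturbAux.quad_sum hEh c]
      refine Finset.sum_nonpos fun i _ => ?_
      by_cases h : 0 < hEh.eigenvalues i
      · rw [hc0 i (not_not_intro h)]; simp
      · exact mul_nonpos_of_nonpos_of_nonneg (le_of_not_gt h) (sq_nonneg _)
    have hqG := hGpos (x : Fin n₁ → ℝ) ((WithLp.ofLp_eq_zero 2).not.2 hx0)
    nlinarith
  obtain ⟨hposA, hunitA⟩ :=
    SchurPerturbAux.posIdx_spec hAherm Vp Vm hApos hAneg hVprank' hVmrank' hple
  refine ⟨⟨hunitA, by rw [hposA, hpE]⟩, ?_⟩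
  -- Part (b)
  obtain ⟨iA⟩ := hunitA.nonempty_invertible
  set A := E₁₁ + δ • G₁₁ with hAdef
  set B := E₁₂ + δ • G₁₂ with hBdef
  have hAinvEq : (A⁻¹)ᵀ = A⁻¹ := by rw [Matrix.transpose_nonsing_inv, hAsymmEq]
  have hMsymmEq : (Bᵀ * A⁻¹ * B)ᵀ = Bᵀ * A⁻¹ * B := by
    rw [Matrix.transpose_mul, Matrix.transpose_mul, Matrix.transpose_transpose, hAinvEq,
      Matrix.mul_assoc]
  set M₀ := E₂₂ + δ • G₂₂ - Bᵀ * A⁻¹ * B with hM₀def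
  have hM₀symmEq : M₀ᵀ = M₀ := by
    rw [hM₀def, Matrix.transpose_sub, Matrix.transpose_add, Matrix.transpose_smul,
      hE₂₂.eq, hG₂₂.eq, hMsymmEq]
  have hM₀herm : M₀.IsHermitian := SchurPerturbAux.herm_of_symm hM₀symmEq
  have hFsymmEq : F₂₂ᵀ = F₂₂ := SchurPerturbAux.symm_of_herm hF₂₂.1
  obtain ⟨C₀, hC₀0, hC₀⟩ := SchurPerturbAux.abs_quad_le M₀ hM₀herm
  obtain ⟨f, hf0, hf⟩ := SchurPerturbAux.posdef_quad_lb hF₂₂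
  refine ⟨-((C₀ + 1) / f), neg_lt_zero.2 (by positivity), fun lam hlam => ?_⟩
  have hlamneg : lam < 0 := lt_of_le_of_lt hlam (neg_lt_zero.2 (by positivity))
  set D := E₂₂ + lam • F₂₂ + δ • G₂₂ with hDdef
  have hSeq : D - Bᵀ * A⁻¹ * B = M₀ + lam • F₂₂ := by
    rw [hDdef, hM₀def]; abel
  have hSsymmEq : (M₀ + lam • F₂₂)ᵀ = M₀ + lam • F₂₂ := by
    rw [Matrix.transpose_add, Matrix.transpose_smul, hM₀symmEq, hFsymmEq]
  have hSherm : (M₀ + lam • F₂₂).IsHermitian := SchurPerturbAux.herm_of_symm hSsymmEq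
  have hSneg : ∀ y : Fin n₂ → ℝ, y ≠ 0 →
      dotProduct y ((M₀ + lam • F₂₂) *ᵥ y) < 0 := by
    intro y hy
    have ht := SchurPerturbAux.dotProduct_self_pos hy
    have h1 := (abs_le.1 (hC₀ y)).2
    have h2 := hf y
    have hsplit2 : dotProduct y ((M₀ + lam • F₂₂) *ᵥ y) =
        dotProduct y (M₀ *ᵥ y) + lam * dotProduct y (F₂₂ *ᵥ y) := by
      rw [Matrix.add_mulVec, Matrix.smul_mulVec, dotProduct_add,
        dotProduct_smul, smul_eq_mul]
    rw [hsplit2]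
    have h3 : lam * dotProduct y (F₂₂ *ᵥ y) ≤
        lam * (f * dotProduct y y) := mul_le_mul_of_nonpos_left h2 hlamneg.le
    have h4 : lam * (f * dotProduct y y) ≤
        -((C₀ + 1) / f) * (f * dotProduct y y) :=
      mul_le_mul_of_nonneg_right hlam (by positivity)
    have h5 : -((C₀ + 1) / f) * (f * dotProduct y y) =
        -((C₀ + 1) * dotProduct y y) := by
      field_simp
    nlinarith
  constructor
  · -- negative definiteness of the Schur complement
    rw [hSeq]
    refine Matrix.PosDef.of_dotProduct_mulVec_pos hSherm.neg fun y hy => ?_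
    have h := hSneg y hy
    simp only [star_trivial, Matrix.neg_mulVec, dotProduct_neg]
    linarith
  · -- inertia of the big matrix
    have hQsymmEq : (Q lam δ)ᵀ = Q lam δ := by
      rw [hQ lam δ, Matrix.fromBlocks_transpose, Matrix.transpose_transpose, hAsymmEq]
      rw [show (E₂₂ + lam • F₂₂ + δ • G₂₂)ᵀ = E₂₂ + lam • F₂₂ + δ • G₂₂ by
        rw [Matrix.transpose_add, Matrix.transpose_add, Matrix.transpose_smul,
          Matrix.transpose_smul, hE₂₂.eq, hG₂₂.eq, hFsymmEq]]
    have hQherm : (Q lam δ).IsHermitian := SchurPerturbAux.herm_of_symm hQsymmEq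
    have hquad : ∀ (x : Fin n₁ → ℝ) (y : Fin n₂ → ℝ),
        dotProduct (Sum.elim x y) (Q lam δ *ᵥ Sum.elim x y) =
          dotProduct (x + (A⁻¹ * B) *ᵥ y) (A *ᵥ (x + (A⁻¹ * B) *ᵥ y)) +
            dotProduct y ((M₀ + lam • F₂₂) *ᵥ y) := by
      intro x y
      have h := Matrix.schur_complement_eq₁₁ (A := A) B D x y hAherm
      simp only [Matrix.conjTranspose_eq_transpose_of_trivial, star_trivial] at h
      rw [hQ lam δ, dotProduct_mulVec, h, ← dotProduct_mulVec,
        ← dotProduct_mulVec, hSeq]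
    let jmap : EuclideanSpace ℝ (Fin n₁) →ₗ[ℝ] EuclideanSpace ℝ (Fin n₁ ⊕ Fin n₂) :=
      { toFun := fun x => (WithLp.toLp 2 (Sum.elim (x : Fin n₁ → ℝ) (0 : Fin n₂ → ℝ)) :
          EuclideanSpace ℝ (Fin n₁ ⊕ Fin n₂))
        map_add' := fun x y => PiLp.ext fun i => by cases i <;> simp
        map_smul' := fun r x => PiLp.ext fun i => by cases i <;> simp }
    let lmap : EuclideanSpace ℝ (Fin n₂) →ₗ[ℝ] EuclideanSpace ℝ (Fin n₁ ⊕ Fin n₂) :=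
      { toFun := fun y => (WithLp.toLp 2 (Sum.elim (-((A⁻¹ * B) *ᵥ (y : Fin n₂ → ℝ))) (y : Fin n₂ → ℝ)) :
          EuclideanSpace ℝ (Fin n₁ ⊕ Fin n₂))
        map_add' := fun y z => PiLp.ext fun i => by
          cases i <;>
            simp [Matrix.mulVec, dotProduct, PiLp.add_apply, mul_add,
              Finset.sum_add_distrib, neg_add, add_comm]
        map_smul' := fun r y => PiLp.ext fun i => by
          cases i <;>
            simp [Matrix.mulVec, dotProduct, PiLp.smul_apply, smul_eq_mul,
              Finset.mul_sum, mul_left_comm] }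
    have hjinj : Function.Injective jmap := by
      intro x y h
      refine PiLp.ext fun a => ?_
      exact congrArg (fun z : EuclideanSpace ℝ (Fin n₁ ⊕ Fin n₂) => z (Sum.inl a)) h
    have hlinj : Function.Injective lmap := by
      intro x y h
      refine PiLp.ext fun b => ?_
      exact congrArg (fun z : EuclideanSpace ℝ (Fin n₁ ⊕ Fin n₂) => z (Sum.inr b)) h
    have hjx : ∀ x : EuclideanSpace ℝ (Fin n₁),
        (jmap x : Fin n₁ ⊕ Fin n₂ → ℝ) = Sum.elim (x : Fin n₁ → ℝ) 0 := fun _ => rfl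
    have hlx : ∀ y : EuclideanSpace ℝ (Fin n₂),
        (lmap y : Fin n₁ ⊕ Fin n₂ → ℝ) =
          Sum.elim (-((A⁻¹ * B) *ᵥ (y : Fin n₂ → ℝ))) (y : Fin n₂ → ℝ) := fun _ => rfl
    have hWpQrank : Module.finrank ℝ (Submodule.map jmap Vp) = p := by
      rw [← (Submodule.equivMapOfInjective jmap hjinj Vp).finrank_eq]
      exact hVprank'
    have hWpQpos : ∀ z ∈ Submodule.map jmap Vp, z ≠ 0 →
        0 < dotProduct (z : Fin n₁ ⊕ Fin n₂ → ℝ) (Q lam δ *ᵥ (z : Fin n₁ ⊕ Fin n₂ → ℝ)) := by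
      rintro z hz hz0
      obtain ⟨x, hx, rfl⟩ := Submodule.mem_map.1 hz
      have hx0 : x ≠ 0 := fun h => hz0 (by rw [h, map_zero])
      rw [hjx x]
      have h := hquad (x : Fin n₁ → ℝ) 0
      rw [Matrix.mulVec_zero, Matrix.mulVec_zero, zero_dotProduct, add_zero, add_zero] at h
      rw [h]
      exact hApos x hx hx0
    have hinf : Submodule.map jmap Vm ⊓ LinearMap.range lmap = ⊥ := by
      rw [Submodule.eq_bot_iff]
      intro z hz
      obtain ⟨h1, h2⟩ := Submodule.mem_inf.1 hz
      obtain ⟨x, _, hxz⟩ := Submodule.mem_map.1 h1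
      obtain ⟨y, hyz⟩ := LinearMap.mem_range.1 h2
      have hy0 : y = 0 := by
        refine PiLp.ext fun b => ?_
        have e1 : (lmap y : Fin n₁ ⊕ Fin n₂ → ℝ) (Sum.inr b) =
            (jmap x : Fin n₁ ⊕ Fin n₂ → ℝ) (Sum.inr b) := by rw [hyz, hxz]
        rw [hjx, hlx] at e1
        simpa using e1
      rw [← hyz, hy0, map_zero]
    have hWmQrank : Module.finrank ℝ ↥(Submodule.map jmap Vm ⊔ LinearMap.range lmap) =
        Fintype.card (Fin n₁ ⊕ Fin n₂) - p := by
      have hsum := Submodule.finrank_sup_add_finrank_inf_eq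
        (Submodule.map jmap Vm) (LinearMap.range lmap)
      rw [hinf, finrank_bot, add_zero] at hsum
      have e1 : Module.finrank ℝ (Submodule.map jmap Vm) = Fintype.card (Fin n₁) - p := by
        rw [← (Submodule.equivMapOfInjective jmap hjinj Vm).finrank_eq]
        exact hVmrank'
      have e2 : Module.finrank ℝ (LinearMap.range lmap) = n₂ := by
        rw [LinearMap.finrank_range_of_inj hlinj, finrank_euclideanSpace, Fintype.card_fin]
      rw [hsum, e1, e2]
      simp only [Fintype.card_sum, Fintype.card_fin]
      have : p ≤ n₁ := by simpa using hple
      omega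
    have hWmQneg : ∀ z ∈ Submodule.map jmap Vm ⊔ LinearMap.range lmap, z ≠ 0 →
        dotProduct (z : Fin n₁ ⊕ Fin n₂ → ℝ) (Q lam δ *ᵥ (z : Fin n₁ ⊕ Fin n₂ → ℝ)) < 0 := by
      intro z hz hz0
      obtain ⟨u, hu, w, hw, rfl⟩ := Submodule.mem_sup.1 hz
      obtain ⟨x, hx, rfl⟩ := Submodule.mem_map.1 hu
      obtain ⟨y, rfl⟩ := LinearMap.mem_range.1 hw
      have hzelim : WithLp.ofLp (jmap x + lmap y : EuclideanSpace ℝ (Fin n₁ ⊕ Fin n₂)) =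
          (Sum.elim (fun a => x a - ((A⁻¹ * B) *ᵥ (y : Fin n₂ → ℝ)) a) (y : Fin n₂ → ℝ) :
            Fin n₁ ⊕ Fin n₂ → ℝ) := by
        funext i
        cases i with
        | inl a =>
          show (jmap x) (Sum.inl a) + (lmap y) (Sum.inl a) = _
          rw [hjx, hlx]
          simp [sub_eq_add_neg]
        | inr b =>
          show (jmap x) (Sum.inr b) + (lmap y) (Sum.inr b) = _
          rw [hjx, hlx]
          simp
      rw [hzelim]
      have h := hquad (fun a => x a - ((A⁻¹ * B) *ᵥ (y : Fin n₂ → ℝ)) a) (y : Fin n₂ → ℝ)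
      have hcancel : (fun a => x a - ((A⁻¹ * B) *ᵥ (y : Fin n₂ → ℝ)) a) +
          (A⁻¹ * B) *ᵥ (y : Fin n₂ → ℝ) = (x : Fin n₁ → ℝ) :=
        funext fun a => by
          show x a - ((A⁻¹ * B) *ᵥ (y : Fin n₂ → ℝ)) a + ((A⁻¹ * B) *ᵥ (y : Fin n₂ → ℝ)) a = x a
          ring
      rw [hcancel] at h
      rw [h]
      by_cases hy : (y : Fin n₂ → ℝ) = 0
      · have hyy : y = 0 := (WithLp.ofLp_eq_zero 2).1 hy
        have hx0 : x ≠ 0 := by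
          intro hx0
          apply hz0
          rw [hx0, hyy, map_zero, map_zero, add_zero]
        have hq2 : dotProduct (y : Fin n₂ → ℝ) ((M₀ + lam • F₂₂) *ᵥ (y : Fin n₂ → ℝ)) = 0 := by
          rw [hy, Matrix.mulVec_zero, zero_dotProduct]
        rw [hq2, add_zero]
        exact hAneg x hx hx0
      · have hq2 := hSneg (y : Fin n₂ → ℝ) hy
        have hq1 : dotProduct (x : Fin n₁ → ℝ) (A *ᵥ (x : Fin n₁ → ℝ)) ≤ 0 := by
          by_cases hx0 : x = 0
          · rw [hx0, WithLp.ofLp_zero]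
            rw [Matrix.mulVec_zero, zero_dotProduct]
          · exact (hAneg x hx hx0).le
        linarith
    have hpsum : p ≤ Fintype.card (Fin n₁ ⊕ Fin n₂) := by
      simp only [Fintype.card_sum, Fintype.card_fin]
      have : p ≤ n₁ := by simpa using hple
      omega
    obtain ⟨hposQ, _⟩ := SchurPerturbAux.posIdx_spec hQherm
      (Submodule.map jmap Vp) (Submodule.map jmap Vm ⊔ LinearMap.range lmap)
      hWpQpos hWmQneg hWpQrank hWmQrank hpsum
    rw [hposQ, hpE]
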